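/- Encodings-free characterization of complexity: let K' be a function from binary strings to ℕ that is upper semicomputable and such that for some constant M the number of strings x with K'(x) < n is at most M·2^n for every n. Then there exists a constant c such that K(x) ≤ K'(x) + c for all binary strings x. -/

import Mathlib

namespace EFC

/-- value of a bit string, little-endian -/
def val (l : List Bool) : ℕ := l.foldr (fun b n => (bif b then 1 else 0) + 2 * n) 0

def enc : ℕ → ℕ → List Bool
  | 0, _ => []
  | (ℓ+1), i => (decide (i % 2 = 1)) :: enc ℓ (i / 2)

@[simp] lemma length_enc (ℓ i : ℕ) : (enc ℓ i).length = ℓ := by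
  induction ℓ generalizing i with
  | zero => rfl
  | succ ℓ ih => simp [enc, ih]

lemma val_enc (ℓ i : ℕ) (h : i < 2 ^ ℓ) : val (enc ℓ i) = i := by
  induction ℓ generalizing i with
  | zero => interval_cases i; rfl
  | succ ℓ ih =>
    have h2 : i / 2 < 2 ^ ℓ := by
      rw [Nat.div_lt_iff_lt_mul two_pos]
      calc i < 2 ^ (ℓ+1) := h
      _ = 2 ^ ℓ * 2 := by ring
    have : val (enc (ℓ+1) i) = (bif decide (i % 2 = 1) then 1 else 0) + 2 * val (enc ℓ (i/2)) := rfl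
    rw [this, ih _ h2]
    rcases Nat.mod_two_eq_zero_or_one i with h1 | h1 <;>
      simp [h1] <;> omega

lemma primrec_val : Primrec val := by
  have h : Primrec (fun p : List Bool × (Bool × ℕ) => (bif p.2.1 then 1 else 0) + 2 * p.2.2) :=
    Primrec.nat_add.comp
      (Primrec.cond (Primrec.fst.comp .snd) (.const 1) (.const 0))
      (Primrec.nat_mul.comp (.const 2) (Primrec.snd.comp .snd))
  exact (Primrec.list_foldr Primrec.id (Primrec.const 0) h.to₂).of_eq fun l => rfl

variable (k : List Bool × ℕ → ℕ)

/-- one enumeration step -/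
def step (m : ℕ) (l : List (List Bool)) (j : ℕ) : List (List Bool) :=
  match Encodable.decode (α := List Bool × ℕ) j with
  | none => l
  | some q => bif decide (k q < m) then (bif decide (q.1 ∈ l) then l else l ++ [q.1]) else l

/-- discovered list after j steps -/
def disc (m j : ℕ) : List (List Bool) :=
  Nat.rec [] (fun y IH => step k m IH y) j

lemma disc_succ (m j : ℕ) : disc k m (j+1) = step k m (disc k m j) j := rfl

lemma prefix_step (m : ℕ) (l : List (List Bool)) (j : ℕ) : l <+: step k m l j := by
  unfold step
  cases Encodable.decode (α := List Bool × ℕ) j with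
  | none => exact List.prefix_refl l
  | some q =>
    by_cases h1 : k q < m <;> by_cases h2 : q.1 ∈ l <;> simp [h1, h2]

lemma prefix_disc (m : ℕ) {j j' : ℕ} (h : j ≤ j') : disc k m j <+: disc k m j' := by
  induction j' with
  | zero => simp_all
  | succ j' ih =>
    rcases Nat.lt_or_ge j (j'+1) with h' | h'
    · exact (ih (by omega)).trans (by rw [disc_succ]; exact prefix_step k m _ j')
    · have : j = j' + 1 := by omega
      subst this; exact List.prefix_refl _

lemma mem_disc (m j : ℕ) {x : List Bool} (hx : x ∈ disc k m j) : ∃ t, k (x, t) < m := by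
  induction j with
  | zero => simp [disc] at hx
  | succ j ih =>
    rw [disc_succ, step] at hx
    rcases hd : Encodable.decode (α := List Bool × ℕ) j with - | q
    · rw [hd] at hx; exact ih hx
    · rw [hd] at hx
      by_cases h1 : k q < m <;> by_cases h2 : q.1 ∈ disc k m j <;>
        simp [h1, h2] at hx
      · exact ih hx
      · rcases hx with hx | hx
        · exact ih hx
        · exact ⟨q.2, by rwa [hx, Prod.mk.eta]⟩
      · exact ih hx
      · exact ih hx

lemma nodup_disc (m j : ℕ) : (disc k m j).Nodup := by
  induction j with
  | zero => simp [disc]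
  | succ j ih =>
    rw [disc_succ, step]
    rcases Encodable.decode (α := List Bool × ℕ) j with - | q
    · exact ih
    · by_cases h1 : k q < m <;> by_cases h2 : q.1 ∈ disc k m j <;> simp [h1, h2, ih]
      rw [← List.concat_eq_append]
      exact List.Nodup.concat h2 ih

lemma exists_mem_disc {m : ℕ} {x : List Bool} (t : ℕ) (ht : k (x, t) < m) :
    ∃ j, x ∈ disc k m j := by
  set j := Encodable.encode ((x, t) : List Bool × ℕ) with hj
  refine ⟨j + 1, ?_⟩
  rw [disc_succ, step, hj, Encodable.encodek]
  simp only [decide_eq_true ht, cond_true]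
  by_cases h2 : x ∈ disc k m j
  · rw [← hj]; simp only [decide_eq_true h2, cond_true]; exact h2
  · rw [← hj]; simp only [decide_eq_false h2, cond_false]
    exact List.mem_append_right _ (List.mem_singleton_self x)

lemma getElem?_disc_mono {m i : ℕ} {x : List Bool} {j j' : ℕ} (h : j ≤ j')
    (hx : (disc k m j)[i]? = some x) : (disc k m j')[i]? = some x := by
  obtain ⟨tail, htail⟩ := prefix_disc k m h
  have hlt : i < (disc k m j).length := by
    rw [List.getElem?_eq_some_iff] at hx; exact hx.1
  rw [← htail, List.getElem?_append_left hlt, hx]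

end EFC

namespace EFC

variable (k : List Bool × ℕ → ℕ)

set_option maxHeartbeats 1000000 in
lemma computable_decide_mem :
    Computable₂ (fun (x : List Bool) (l : List (List Bool)) => decide (x ∈ l)) := by
  have h : Primrec (fun p : List Bool × List (List Bool) =>
      decide (@List.idxOf _ instBEqOfDecidableEq p.1 p.2 < p.2.length)) :=
    Primrec.nat_lt.decide.comp (Primrec.list_idxOf.comp .fst .snd) (Primrec.list_length.comp .snd)
  have h2 : Computable (fun p : List Bool × List (List Bool) => decide (p.1 ∈ p.2)) :=
    h.to_comp.of_eq fun p => decide_eq_decide.mpr (@List.idxOf_lt_length_iff _ instBEqOfDecidableEq _ _ _)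
  exact h2

set_option maxHeartbeats 1000000 in
lemma computable_disc (hk : Computable k) : Computable₂ (disc k) := by
  have hg : Computable₂ (fun (q : (ℕ × ℕ) × ℕ × List (List Bool)) (s : List Bool × ℕ) =>
      bif decide (k s < q.1.1) then
        (bif decide (s.1 ∈ q.2.2) then q.2.2 else q.2.2 ++ [s.1]) else q.2.2) := by
    have hl : Computable (fun p : ((ℕ × ℕ) × ℕ × List (List Bool)) × (List Bool × ℕ) =>
        p.1.2.2) := Computable.snd.comp (Computable.snd.comp .fst)
    have hs : Computable (fun p : ((ℕ × ℕ) × ℕ × List (List Bool)) × (List Bool × ℕ) =>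
        p.2) := Computable.snd
    have hc1 : Computable (fun p : ((ℕ × ℕ) × ℕ × List (List Bool)) × (List Bool × ℕ) =>
        decide (k p.2 < p.1.1.1)) :=
      Primrec.nat_lt.decide.to_comp.comp (hk.comp hs)
        (Computable.fst.comp (Computable.fst.comp .fst))
    have hc2 : Computable (fun p : ((ℕ × ℕ) × ℕ × List (List Bool)) × (List Bool × ℕ) =>
        decide (p.2.1 ∈ p.1.2.2)) :=
      computable_decide_mem.comp (Computable.fst.comp hs) hl
    have happ : Computable (fun p : ((ℕ × ℕ) × ℕ × List (List Bool)) × (List Bool × ℕ) =>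
        p.1.2.2 ++ [p.2.1]) :=
      Primrec.list_append.to_comp.comp hl
        (Primrec.list_cons.to_comp.comp (Computable.fst.comp hs) (.const []))
    have hinner : Computable (fun p : ((ℕ × ℕ) × ℕ × List (List Bool)) × (List Bool × ℕ) =>
        bif decide (p.2.1 ∈ p.1.2.2) then p.1.2.2 else p.1.2.2 ++ [p.2.1]) :=
      Computable.cond hc2 hl happ
    have houter : Computable (fun p : ((ℕ × ℕ) × ℕ × List (List Bool)) × (List Bool × ℕ) =>
        bif decide (k p.2 < p.1.1.1) then
          (bif decide (p.2.1 ∈ p.1.2.2) then p.1.2.2 else p.1.2.2 ++ [p.2.1]) else p.1.2.2) :=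
      Computable.cond hc1 hinner hl
    exact houter.to₂
  have hstep : Computable₂ (fun (q : ℕ × ℕ) (p : ℕ × List (List Bool)) =>
      step k q.1 p.2 p.1) := by
    show Computable (fun r : (ℕ × ℕ) × ℕ × List (List Bool) => step k r.1.1 r.2.2 r.2.1)
    have := Computable.option_casesOn
      (o := fun (r : (ℕ × ℕ) × ℕ × List (List Bool)) =>
        Encodable.decode (α := List Bool × ℕ) r.2.1)
      (f := fun r => r.2.2)
      (g := fun r s =>
        bif decide (k s < r.1.1) then
          (bif decide (s.1 ∈ r.2.2) then r.2.2 else r.2.2 ++ [s.1]) else r.2.2)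
      ((Computable.decode (α := List Bool × ℕ)).comp
        ((Computable.fst (α := ℕ) (β := List (List Bool))).comp
          (Computable.snd (α := ℕ × ℕ))))
      (Computable.snd.comp .snd) hg
    refine this.of_eq fun r => ?_
    beta_reduce
    unfold step
    cases Encodable.decode (α := List Bool × ℕ) r.2.1 <;> rfl
  have := Computable.nat_rec (f := fun q : ℕ × ℕ => q.2)
    (g := fun _ => ([] : List (List Bool)))
    (Computable.snd) (Computable.const []) hstep
  refine this.of_eq fun q => rfl

/-- the decompressor -/
def D (a : ℕ) : List Bool →. List Bool :=
  fun p => Nat.rfindOpt (fun j => (disc k (p.length - a) j)[val p]?)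

lemma partrec_D (hk : Computable k) (a : ℕ) : Partrec (D k a) := by
  refine Partrec.rfindOpt ?_
  have hm : Computable (fun q : List Bool × ℕ => q.1.length - a) :=
    Primrec.to_comp (Primrec.nat_sub.comp (Primrec.list_length.comp .fst) (.const a))
  have hv : Computable (fun q : List Bool × ℕ => val q.1) :=
    (primrec_val.comp Primrec.fst).to_comp
  have hd : Computable (fun q : List Bool × ℕ => disc k (q.1.length - a) q.2) :=
    (computable_disc k hk).comp hm Computable.snd
  exact Computable.to₂ (Primrec.list_getElem?.to_comp.comp hd hv)

end EFC

namespace EFC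

variable {k : List Bool × ℕ → ℕ} {K' : List Bool → ℕ}

lemma k_antitone (hmono : ∀ x n, k (x, n + 1) ≤ k (x, n)) (x : List Bool)
    {t t' : ℕ} (h : t ≤ t') : k (x, t') ≤ k (x, t) := by
  induction t' with
  | zero => simp_all
  | succ t' ih =>
    rcases Nat.lt_or_ge t (t'+1) with h' | h'
    · exact (hmono x t').trans (ih (by omega))
    · have : t = t' + 1 := by omega
      rw [this]

lemma K'_lt_of_k_lt (hmono : ∀ x n, k (x, n + 1) ≤ k (x, n))
    (hlim : ∀ x : List Bool, ∃ N : ℕ, ∀ n ≥ N, k (x, n) = K' x)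
    {x : List Bool} {t m : ℕ} (h : k (x, t) < m) : K' x < m := by
  obtain ⟨N, hN⟩ := hlim x
  calc K' x = k (x, max t N) := (hN _ (le_max_right _ _)).symm
  _ ≤ k (x, t) := k_antitone hmono x (le_max_left _ _)
  _ < m := h

lemma exists_program (hmono : ∀ x n, k (x, n + 1) ≤ k (x, n))
    (hlim : ∀ x : List Bool, ∃ N : ℕ, ∀ n ≥ N, k (x, n) = K' x)
    {M : ℕ}
    (hcount : ∀ n : ℕ, {x : List Bool | K' x < n}.Finite ∧
      {x : List Bool | K' x < n}.ncard ≤ M * 2 ^ n)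
    (x : List Bool) :
    ∃ p : List Bool, x ∈ D k M p ∧ p.length = K' x + 1 + M := by
  set m := K' x + 1 with hm
  -- find a stage where x is discovered
  obtain ⟨N, hN⟩ := hlim x
  have hkN : k (x, N) < m := by rw [hN N le_rfl]; omega
  obtain ⟨j, hj⟩ := exists_mem_disc k N hkN
  set i := @List.idxOf _ instBEqOfDecidableEq x (disc k m j) with hi
  have hilt : i < (disc k m j).length := by rw [hi]; exact (@List.idxOf_lt_length_iff _ instBEqOfDecidableEq _ _ _).2 hj
  -- counting bound
  have hfin := (hcount m).1
  have hlen : (disc k m j).length ≤ M * 2 ^ m := by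
    have hsub : (disc k m j).toFinset ⊆ hfin.toFinset := by
      intro y hy
      rw [List.mem_toFinset] at hy
      rw [Set.Finite.mem_toFinset]
      obtain ⟨t, ht⟩ := mem_disc k m j hy
      exact K'_lt_of_k_lt hmono hlim ht
    calc (disc k m j).length = (disc k m j).toFinset.card :=
          (List.toFinset_card_of_nodup (nodup_disc k m j)).symm
    _ ≤ hfin.toFinset.card := Finset.card_le_card hsub
    _ = {y : List Bool | K' y < m}.ncard := (Set.ncard_eq_toFinset_card _ hfin).symm
    _ ≤ M * 2 ^ m := (hcount m).2
  have hipow : i < 2 ^ (m + M) := by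
    calc i < M * 2 ^ m := lt_of_lt_of_le hilt hlen
    _ ≤ 2 ^ M * 2 ^ m := Nat.mul_le_mul_right _ (Nat.lt_two_pow_self (n := M)).le
    _ = 2 ^ (m + M) := by rw [pow_add]; ring
  -- the program
  refine ⟨enc (m + M) i, ?_, by rw [length_enc]⟩
  have hplen : (enc (m + M) i).length - M = m := by simp
  have hpval : val (enc (m + M) i) = i := val_enc _ _ hipow
  show x ∈ Nat.rfindOpt fun j' => (disc k ((enc (m + M) i).length - M) j')[val (enc (m + M) i)]?
  rw [hplen, hpval]
  have H : ∀ {a : List Bool} {j₁ j₂ : ℕ}, j₁ ≤ j₂ →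
      a ∈ (disc k m j₁)[i]? → a ∈ (disc k m j₂)[i]? := by
    intro a j₁ j₂ hle ha
    rw [Option.mem_def] at ha ⊢
    exact getElem?_disc_mono k hle ha
  rw [Nat.rfindOpt_mono H]
  refine ⟨j, ?_⟩
  rw [Option.mem_def, hi]
  exact @List.getElem?_idxOf _ instBEqOfDecidableEq _ _ _ hj

end EFC



/-- Plain Kolmogorov complexity of `x` with respect to decompressor `D`. -/
noncomputable def Kc (D : List Bool →. List Bool) (x : List Bool) : ℕ∞ :=
  sInf {n : ℕ∞ | ∃ p : List Bool, x ∈ D p ∧ (p.length : ℕ∞) = n}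

/-- `U` is an optimal decompressor. -/
def OptimalDecompressor (U : List Bool →. List Bool) : Prop :=
  Partrec U ∧ ∀ D : List Bool →. List Bool, Partrec D →
    ∃ c : ℕ, ∀ x : List Bool, Kc U x ≤ Kc D x + (c : ℕ∞)

/-- `F` is upper semicomputable: the pointwise limit of a computable family
of nonincreasing (in the second argument) natural-valued functions. -/
def UpperSemicomputable (F : List Bool → ℕ) : Prop :=
  ∃ k : List Bool × ℕ → ℕ, Computable k ∧
    (∀ x n, k (x, n + 1) ≤ k (x, n)) ∧
    (∀ x : List Bool, ∃ N : ℕ, ∀ n ≥ N, k (x, n) = F x)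

/-- Encodings-free characterization of complexity: if `K'` is upper
semicomputable and the number of strings with `K'(x) < n` is at most `M·2^n`,
then `K(x) ≤ K'(x) + c` for some constant `c`. -/
theorem encodings_free_characterization
    (U : List Bool →. List Bool) (hU : OptimalDecompressor U)
    (K' : List Bool → ℕ) (hK' : UpperSemicomputable K')
    (M : ℕ)
    (hcount : ∀ n : ℕ, {x : List Bool | K' x < n}.Finite ∧
      {x : List Bool | K' x < n}.ncard ≤ M * 2 ^ n) :
    ∃ c : ℕ, ∀ x : List Bool, Kc U x ≤ (K' x : ℕ∞) + (c : ℕ∞) := by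

  obtain ⟨hUpart, hopt⟩ := hU
  obtain ⟨k, hk, hmono, hlim⟩ := hK'
  obtain ⟨c0, hc0⟩ := hopt (EFC.D k M) (EFC.partrec_D k hk M)
  refine ⟨M + 1 + c0, fun x => ?_⟩
  obtain ⟨p, hxp, hplen⟩ := EFC.exists_program hmono hlim hcount x
  have h1 : Kc (EFC.D k M) x ≤ ((K' x + 1 + M : ℕ) : ℕ∞) := by
    apply sInf_le
    exact ⟨p, hxp, by rw [hplen]⟩
  calc Kc U x ≤ Kc (EFC.D k M) x + (c0 : ℕ∞) := hc0 x
  _ ≤ ((K' x + 1 + M : ℕ) : ℕ∞) + (c0 : ℕ∞) := add_le_add_left h1 _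
  _ = (K' x : ℕ∞) + ((M + 1 + c0 : ℕ) : ℕ∞) := by push_cast; ring
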